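/- Let λ > 0 and f ≥ 0, and let u satisfy Δu + f(u) = 0 on an open set containing the annular region Σ = {p ∈ ℝ² : a < |p| < λ} (with 0 < a < λ). Define ψ(p) := u(p) − u(λ² p/|p|²) on Σ. Then ψ satisfies the differential inequality Δψ(p) + [f(u(p)) − f(u(λ²p/|p|²))] ≥ 0 on Σ. -/

import Mathlib

open scoped RealInnerProductSpace

noncomputable abbrev E2 : Type := EuclideanSpace ℝ (Fin 2)

/-- The point of ℝ² with coordinates `x`, `y`. -/
noncomputable def pt (x y : ℝ) : E2 := (WithLp.equiv 2 (Fin 2 → ℝ)).symm ![x, y]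

/-- The Laplacian of `u : ℝ² → ℝ`. -/
noncomputable def lap (u : E2 → ℝ) (x : E2) : ℝ :=
  ∑ i : Fin 2, fderiv ℝ (fun y => fderiv ℝ u y (EuclideanSpace.single i 1)) x
    (EuclideanSpace.single i 1)

/-! ### Auxiliary machinery: the Kelvin inversion map and its derivatives -/

noncomputable def Kmap (lam : ℝ) : E2 → E2 := fun y => (lam^2 * (‖y‖^2)⁻¹) • y

noncomputable def dgm (lam : ℝ) (y : E2) : E2 →L[ℝ] ℝ :=
  (-(lam^2 * (‖y‖^2)⁻¹^2) * 2) • innerSL ℝ y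

noncomputable def DK (lam : ℝ) (y : E2) : E2 →L[ℝ] E2 :=
  (lam^2 * (‖y‖^2)⁻¹) • ContinuousLinearMap.id ℝ E2 + (dgm lam y).smulRight y

lemma hasFDerivAt_normsq (p : E2) : HasFDerivAt (fun y : E2 => ‖y‖^2) (2 • innerSL ℝ p) p := by
  simpa using (hasFDerivAt_id p).norm_sq

lemma hasFDerivAt_g (lam : ℝ) {p : E2} (hp : p ≠ 0) :
    HasFDerivAt (fun y : E2 => lam^2 * (‖y‖^2)⁻¹) (dgm lam p) p := by
  have hne : ‖p‖^2 ≠ 0 := pow_ne_zero 2 (norm_ne_zero_iff.2 hp)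
  have h := ((hasDerivAt_inv hne).comp_hasFDerivAt p (hasFDerivAt_normsq p)).const_mul (lam^2)
  refine h.congr_fderiv ?_
  ext w
  simp [dgm, smul_smul]
  ring

lemma hasFDerivAt_K (lam : ℝ) {p : E2} (hp : p ≠ 0) :
    HasFDerivAt (Kmap lam) (DK lam p) p := by
  have := (hasFDerivAt_g lam hp).smul (hasFDerivAt_id p)
  exact this

lemma fderiv_psi (lam : ℝ) (U : Set E2) (hUo : IsOpen U) (u ψ : E2 → ℝ)
    (hureg : ContDiffOn ℝ 2 u U) (hψ : ∀ y, ψ y = u y - u (Kmap lam y))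
    {y : E2} (hy0 : y ≠ 0) (hyU : y ∈ U) (hKyU : Kmap lam y ∈ U) (v : E2) :
    fderiv ℝ ψ y v = fderiv ℝ u y v - lam^2 * (‖y‖^2)⁻¹ * fderiv ℝ u (Kmap lam y) v
      + lam^2 * ((‖y‖^2 * ‖y‖^2)⁻¹) * (2*⟪v,y⟫) * fderiv ℝ u (Kmap lam y) y := by
  have hud : ∀ x ∈ U, HasFDerivAt u (fderiv ℝ u x) x := fun x hx =>
    ((hureg.differentiableOn (by norm_num) x hx).differentiableAt (hUo.mem_nhds hx)).hasFDerivAt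
  have hsub : HasFDerivAt ψ
      (fderiv ℝ u y - (fderiv ℝ u (Kmap lam y)).comp (DK lam y)) y := by
    have h := (hud y hyU).sub ((hud _ hKyU).comp y (hasFDerivAt_K lam hy0))
    have hψ' : ψ = fun z => u z - u (Kmap lam z) := funext hψ
    rw [hψ']; exact h
  rw [hsub.fderiv]
  simp [DK, dgm, ContinuousLinearMap.sub_apply, ContinuousLinearMap.comp_apply,
    ContinuousLinearMap.add_apply, ContinuousLinearMap.smul_apply,
    ContinuousLinearMap.smulRight_apply, smul_eq_mul, real_inner_comm y v]
  ring

set_option maxHeartbeats 2000000 in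
lemma key_second (lam : ℝ) (U : Set E2) (hUo : IsOpen U) (u ψ : E2 → ℝ)
    (hureg : ContDiffOn ℝ 2 u U) (hψ : ∀ y, ψ y = u y - u (Kmap lam y))
    (V : Set E2) (hVo : IsOpen V)
    (hV : ∀ y ∈ V, y ≠ 0 ∧ y ∈ U ∧ Kmap lam y ∈ U) {p : E2} (hp : p ∈ V) (v : E2) :
    fderiv ℝ (fun y => fderiv ℝ ψ y v) p v =
      fderiv ℝ (fderiv ℝ u) p v v
      - (lam^2 * (‖p‖^2)⁻¹)^2 * fderiv ℝ (fderiv ℝ u) (Kmap lam p) v v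
      + (2*lam^2*(‖p‖^2*‖p‖^2)⁻¹*⟪v,p⟫) * (lam^2 * (‖p‖^2)⁻¹) *
          (fderiv ℝ (fderiv ℝ u) (Kmap lam p) p v + fderiv ℝ (fderiv ℝ u) (Kmap lam p) v p)
      - (2*lam^2*(‖p‖^2*‖p‖^2)⁻¹*⟪v,p⟫)^2 * fderiv ℝ (fderiv ℝ u) (Kmap lam p) p p
      + 2 * (2*lam^2*(‖p‖^2*‖p‖^2)⁻¹*⟪v,p⟫) * fderiv ℝ u (Kmap lam p) v
      + (2*lam^2*(‖p‖^2*‖p‖^2)⁻¹*⟪v,v⟫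
          - 8*lam^2*(‖p‖^2*‖p‖^2*‖p‖^2)⁻¹*⟪v,p⟫^2) * fderiv ℝ u (Kmap lam p) p := by
  obtain ⟨hp0, hpU, hKpU⟩ := hV p hp
  have hq : ‖p‖^2 ≠ 0 := pow_ne_zero 2 (norm_ne_zero_iff.2 hp0)
  set Φ := fderiv ℝ u with hΦdef
  have hΦ1 : ContDiffOn ℝ 1 Φ U := hureg.fderiv_of_isOpen hUo (by norm_num)
  have hΦd : ∀ x ∈ U, HasFDerivAt Φ (fderiv ℝ Φ x) x := fun x hx =>
    ((hΦ1.differentiableOn (one_ne_zero) x hx).differentiableAt (hUo.mem_nhds hx)).hasFDerivAt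
  have hev : (fun y => fderiv ℝ ψ y v) =ᶠ[nhds p]
      (fun y => Φ y v - lam^2 * (‖y‖^2)⁻¹ * Φ (Kmap lam y) v
        + lam^2 * ((‖y‖^2 * ‖y‖^2)⁻¹) * (2*⟪v,y⟫) * Φ (Kmap lam y) y) := by
    filter_upwards [hVo.mem_nhds hp] with y hy
    exact fderiv_psi lam U hUo u ψ hureg hψ (hV y hy).1 (hV y hy).2.1 (hV y hy).2.2 v
  rw [hev.fderiv_eq]
  have hKp := hasFDerivAt_K lam hp0
  have hΦKp := hΦd (Kmap lam p) hKpU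
  have hA : HasFDerivAt (fun y => Φ y v) ((fderiv ℝ Φ p).flip v) p := by
    have := (hΦd p hpU).clm_apply (hasFDerivAt_const v p)
    simpa using this
  have hB : HasFDerivAt (fun y => Φ (Kmap lam y) v)
      (((fderiv ℝ Φ (Kmap lam p)).comp (DK lam p)).flip v) p := by
    have := (hΦKp.comp p hKp).clm_apply (hasFDerivAt_const v p)
    simpa [Function.comp] using this
  have hC : HasFDerivAt (fun y => Φ (Kmap lam y) y)
      ((Φ (Kmap lam p)).comp (ContinuousLinearMap.id ℝ E2)
        + ((fderiv ℝ Φ (Kmap lam p)).comp (DK lam p)).flip p) p := by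
    have := (hΦKp.comp p hKp).clm_apply (hasFDerivAt_id p)
    simpa [Function.comp] using this
  have hg' := hasFDerivAt_g lam hp0
  have hinv4 : HasFDerivAt (fun y : E2 => (‖y‖^2 * ‖y‖^2)⁻¹)
      ((-((‖p‖^2*‖p‖^2)^2)⁻¹) • (‖p‖^2 • (2 • innerSL ℝ p) + ‖p‖^2 • (2 • innerSL ℝ p))) p := by
    have hmul := (hasFDerivAt_normsq p).mul' (hasFDerivAt_normsq p)
    have := (hasDerivAt_inv (mul_ne_zero hq hq)).comp_hasFDerivAt p hmul
    refine this.congr_fderiv ?_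
    ext w
    simp [smul_smul]
    ring
  have hinner : HasFDerivAt (fun y : E2 => (⟪v,y⟫:ℝ)) (innerSL ℝ v) p :=
    (innerSL ℝ v).hasFDerivAt
  have hm : HasFDerivAt (fun y : E2 => lam^2 * ((‖y‖^2 * ‖y‖^2)⁻¹) * (2*⟪v,y⟫))
      ((lam^2 * ((‖p‖^2 * ‖p‖^2)⁻¹)) • (2:ℝ) • (innerSL ℝ v)
        + ((lam^2:ℝ) • ((-((‖p‖^2*‖p‖^2)^2)⁻¹) • (‖p‖^2 • (2 • innerSL ℝ p) + ‖p‖^2 • (2 • innerSL ℝ p)))).smulRight (2*⟪v,p⟫)) p := by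
    have h1 := hinv4.const_mul (lam^2)
    have h2 := hinner.const_mul (2:ℝ)
    exact h1.mul' h2
  have hF := (hA.sub (hg'.mul' hB)).add (hm.mul' hC)
  replace hF : HasFDerivAt (fun y => Φ y v - lam^2 * (‖y‖^2)⁻¹ * Φ (Kmap lam y) v
          + lam^2 * ((‖y‖^2 * ‖y‖^2)⁻¹) * (2*⟪v,y⟫) * Φ (Kmap lam y) y) _ p := hF
  rw [hF.fderiv]
  simp only [ContinuousLinearMap.add_apply, ContinuousLinearMap.sub_apply,
    ContinuousLinearMap.smul_apply, ContinuousLinearMap.comp_apply,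
    ContinuousLinearMap.flip_apply, ContinuousLinearMap.smulRight_apply,
    ContinuousLinearMap.coe_smul', Pi.smul_apply, ContinuousLinearMap.id_apply,
    DK, dgm, innerSL_apply_apply, op_smul_eq_mul, smul_eq_mul, map_add,
    ContinuousLinearMap.map_smul_of_tower, ContinuousLinearMap.map_smul]
  simp only [real_inner_comm p v]
  field_simp
  ring

set_option maxHeartbeats 2000000 in
lemma lap_psi (lam : ℝ) (U : Set E2) (hUo : IsOpen U) (u ψ : E2 → ℝ)
    (hureg : ContDiffOn ℝ 2 u U) (hψ : ∀ y, ψ y = u y - u (Kmap lam y))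
    (V : Set E2) (hVo : IsOpen V)
    (hV : ∀ y ∈ V, y ≠ 0 ∧ y ∈ U ∧ Kmap lam y ∈ U) {p : E2} (hp : p ∈ V) :
    lap ψ p = lap u p - (lam^2 * (‖p‖^2)⁻¹)^2 * lap u (Kmap lam p) := by
  obtain ⟨hp0, hpU, hKpU⟩ := hV p hp
  have hq : ‖p‖^2 ≠ 0 := pow_ne_zero 2 (norm_ne_zero_iff.2 hp0)
  have hΦ1 : ContDiffOn ℝ 1 (fderiv ℝ u) U := hureg.fderiv_of_isOpen hUo (by norm_num)
  have hΦd : ∀ x ∈ U, HasFDerivAt (fderiv ℝ u) (fderiv ℝ (fderiv ℝ u) x) x := fun x hx =>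
    ((hΦ1.differentiableOn (one_ne_zero) x hx).differentiableAt (hUo.mem_nhds hx)).hasFDerivAt
  have hlapu : ∀ x ∈ U, ∀ w : E2,
      fderiv ℝ (fun y => fderiv ℝ u y w) x w = fderiv ℝ (fderiv ℝ u) x w w := by
    intro x hx w
    have := (hΦd x hx).clm_apply (hasFDerivAt_const w x)
    rw [this.fderiv]
    simp
  set e : Fin 2 → E2 := fun i => EuclideanSpace.single i (1:ℝ) with he
  have hdecomp : p = p 0 • e 0 + p 1 • e 1 := by
    ext j
    fin_cases j <;> simp [he, EuclideanSpace.single_apply]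
  set H := fderiv ℝ (fderiv ℝ u) (Kmap lam p) with hH
  set G := fderiv ℝ u (Kmap lam p) with hG
  have hHr : ∀ w : E2, H w p = p 0 * H w (e 0) + p 1 * H w (e 1) := by
    intro w
    conv_lhs => rw [hdecomp]
    simp
  have hHl : ∀ w : E2, H p w = p 0 * H (e 0) w + p 1 * H (e 1) w := by
    intro w
    conv_lhs => rw [hdecomp]
    simp
  have hGp : G p = p 0 * G (e 0) + p 1 * G (e 1) := by
    conv_lhs => rw [hdecomp]
    simp
  have hip : ∀ i : Fin 2, (⟪e i, p⟫ : ℝ) = p i := by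
    intro i; simp [he, EuclideanSpace.inner_single_left]
  have hiee : ∀ i : Fin 2, (⟪e i, e i⟫ : ℝ) = 1 := by
    intro i; simp [he, EuclideanSpace.inner_single_left, EuclideanSpace.single_apply]
  have hq2 : ‖p‖^2 = p 0^2 + p 1^2 := by
    rw [EuclideanSpace.norm_eq, Real.sq_sqrt (by positivity), Fin.sum_univ_two]
    simp
  have k0 := key_second lam U hUo u ψ hureg hψ V hVo hV hp (e 0)
  have k1 := key_second lam U hUo u ψ hureg hψ V hVo hV hp (e 1)
  simp only [lap, Fin.sum_univ_two]
  rw [show EuclideanSpace.single (0 : Fin 2) (1:ℝ) = e 0 from rfl,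
      show EuclideanSpace.single (1 : Fin 2) (1:ℝ) = e 1 from rfl]
  rw [k0, k1, hlapu p hpU (e 0), hlapu p hpU (e 1),
      hlapu (Kmap lam p) hKpU (e 0), hlapu (Kmap lam p) hKpU (e 1)]
  rw [← hH, ← hG]
  rw [hHr (e 0), hHr (e 1), hHl (e 0), hHl (e 1), hHr p, hHl (e 0), hHl (e 1), hGp]
  rw [hip 0, hip 1, hiee 0, hiee 1, hq2]
  have hqq : p 0^2 + p 1^2 ≠ 0 := by rw [← hq2]; exact hq
  field_simp
  ring

theorem stmt9 (a lam : ℝ) (ha : 0 < a) (halam : a < lam)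
    (f : ℝ → ℝ) (hfpos : ∀ t, 0 ≤ f t)
    (U : Set E2) (hUo : IsOpen U)
    (hU : {p : E2 | a < ‖p‖ ∧ ‖p‖ < lam ^ 2 / a} ⊆ U)
    (u : E2 → ℝ) (hureg : ContDiffOn ℝ 2 u U)
    (hueq : ∀ x ∈ U, lap u x + f (u x) = 0)
    (ψ : E2 → ℝ) (hψ : ∀ p : E2, ψ p = u p - u ((lam ^ 2 / ‖p‖ ^ 2) • p)) :
    ∀ p : E2, a < ‖p‖ → ‖p‖ < lam →
      0 ≤ lap ψ p + (f (u p) - f (u ((lam ^ 2 / ‖p‖ ^ 2) • p))) := by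
  intro p hap hpl
  have hlam : 0 < lam := lt_trans ha halam
  have hψ' : ∀ y, ψ y = u y - u (Kmap lam y) := by
    intro y
    rw [hψ y, Kmap, div_eq_mul_inv]
  set V : Set E2 := {y | a < ‖y‖ ∧ ‖y‖ < lam} with hVdef
  have hVo : IsOpen V :=
    (isOpen_lt continuous_const continuous_norm).inter (isOpen_lt continuous_norm continuous_const)
  have hKnorm : ∀ y : E2, y ≠ 0 → ‖Kmap lam y‖ = lam^2 / ‖y‖ := by
    intro y hy
    have hny : 0 < ‖y‖ := norm_pos_iff.2 hy
    rw [Kmap, norm_smul]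
    rw [Real.norm_eq_abs, abs_of_pos (by positivity)]
    field_simp
  have hV : ∀ y ∈ V, y ≠ 0 ∧ y ∈ U ∧ Kmap lam y ∈ U := by
    intro y hy
    obtain ⟨hy1, hy2⟩ := hy
    have hny : 0 < ‖y‖ := lt_trans ha hy1
    have hy0 : y ≠ 0 := norm_pos_iff.1 hny
    refine ⟨hy0, hU ⟨hy1, ?_⟩, hU ⟨?_, ?_⟩⟩
    · calc ‖y‖ < lam := hy2
        _ < lam^2/a := by rw [lt_div_iff₀ ha]; nlinarith
    · rw [hKnorm y hy0]
      calc a < lam := halam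
        _ < lam^2/‖y‖ := by rw [lt_div_iff₀ hny]; nlinarith
    · rw [hKnorm y hy0]
      exact div_lt_div_of_pos_left (by positivity) ha hy1
  have hpV : p ∈ V := ⟨hap, hpl⟩
  obtain ⟨hp0, hpU, hKpU⟩ := hV p hpV
  have hlap := lap_psi lam U hUo u ψ hureg hψ' V hVo hV hpV
  have hKeq : (lam ^ 2 / ‖p‖ ^ 2) • p = Kmap lam p := by rw [Kmap, div_eq_mul_inv]
  have h1 : lap u p = -f (u p) := by linarith [hueq p hpU]
  have h2 : lap u (Kmap lam p) = -f (u (Kmap lam p)) := by linarith [hueq _ hKpU]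
  rw [hKeq, hlap, h1, h2]
  have hc : (1:ℝ) ≤ (lam^2 * (‖p‖^2)⁻¹)^2 := by
    have hnp : 0 < ‖p‖ := lt_trans ha hap
    have : (1:ℝ) ≤ lam^2 * (‖p‖^2)⁻¹ := by
      rw [← div_eq_mul_inv, le_div_iff₀ (by positivity)]
      nlinarith
    nlinarith
  have := hfpos (u (Kmap lam p))
  nlinarith
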